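/- Let G be a Borel probability measure on ℝ, ν > 0, z ∈ ℝ, and ρ ∈ (0, e⁻¹/√(2π)). Define Q(z) = ∫ (z−τ)·τ·φ((z−τ)/ν) ν⁻¹ dG(τ) and f_{G,ν}(z) = ∫ φ((z−τ)/ν) ν⁻¹ dG(τ). Then |Q(z)| / ( f_{G,ν}(z) ∨ (ρ/ν) ) ≤ ν · φ₊(ρ) · ( |z| + ν φ₊(ρ) ), where φ₊(ρ) = √(log(1/(2πρ²))). -/

import Mathlib

open MeasureTheory

/-- The standard normal density `φ(t) = (2π)^{-1/2} exp(−t²/2)`. -/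
noncomputable def gaussPdf (t : ℝ) : ℝ := (Real.sqrt (2 * Real.pi))⁻¹ * Real.exp (-(t ^ 2) / 2)

/-- The Gaussian mixture density `f_{G,ν}(z) = ∫ φ((z−τ)/ν) ν⁻¹ dG(τ)`. -/
noncomputable def mixDens (G : Measure ℝ) (ν z : ℝ) : ℝ :=
  ∫ τ, gaussPdf ((z - τ) / ν) * ν⁻¹ ∂G

lemma sqrt_two_pi_pos : 0 < Real.sqrt (2 * Real.pi) := Real.sqrt_pos.2 (by positivity)

lemma gaussPdf_pos (t : ℝ) : 0 < gaussPdf t :=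
  mul_pos (inv_pos.2 sqrt_two_pi_pos) (Real.exp_pos _)

lemma gaussPdf_le (t : ℝ) : gaussPdf t ≤ (Real.sqrt (2 * Real.pi))⁻¹ := by
  unfold gaussPdf
  nth_rewrite 2 [← mul_one ((Real.sqrt (2*Real.pi))⁻¹)]
  apply mul_le_mul_of_nonneg_left _ (inv_nonneg.2 (Real.sqrt_nonneg _))
  rw [Real.exp_le_one_iff]
  nlinarith [sq_nonneg t]

lemma gaussPdf_continuous : Continuous gaussPdf := by
  unfold gaussPdf; fun_prop

lemma keyA (c s : ℝ) : (c*s - c^2 + 1) * Real.exp (-(s^2)/2) ≤ Real.exp (-(c^2)/2) := by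
  have h1 : c*s - c^2 + 1 ≤ Real.exp (c*s - c^2) := by
    have := Real.add_one_le_exp (c*s - c^2); linarith
  calc (c*s - c^2 + 1) * Real.exp (-(s^2)/2)
      ≤ Real.exp (c*s - c^2) * Real.exp (-(s^2)/2) :=
        mul_le_mul_of_nonneg_right h1 (Real.exp_nonneg _)
    _ = Real.exp (c*s - c^2 + -(s^2)/2) := (Real.exp_add _ _).symm
    _ ≤ Real.exp (-(c^2)/2) := by
        apply Real.exp_le_exp.2; nlinarith [sq_nonneg (s - c)]

lemma keyB (c s : ℝ) : (s^2 - c^2 + 2) * Real.exp (-(s^2)/2) ≤ 2 * Real.exp (-(c^2)/2) := by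
  have h1 : (s^2 - c^2)/2 + 1 ≤ Real.exp ((s^2 - c^2)/2) := by
    have := Real.add_one_le_exp ((s^2 - c^2)/2); linarith
  have h2 : Real.exp ((s^2-c^2)/2) * Real.exp (-(s^2)/2) = Real.exp (-(c^2)/2) := by
    rw [← Real.exp_add]; ring_nf
  calc (s^2 - c^2 + 2) * Real.exp (-(s^2)/2)
      = 2 * (((s^2 - c^2)/2 + 1) * Real.exp (-(s^2)/2)) := by ring
    _ ≤ 2 * (Real.exp ((s^2-c^2)/2) * Real.exp (-(s^2)/2)) := by
        have := mul_le_mul_of_nonneg_right h1 (Real.exp_nonneg (-(s^2)/2)); linarith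
    _ = 2 * Real.exp (-(c^2)/2) := by rw [h2]

/-- `|t| φ(t) ≤ (c - 1/c) φ(t) + (1/c) φ(c)` for `c > 0`. -/
lemma key1 (c t : ℝ) (hc : 0 < c) :
    |t| * gaussPdf t ≤ (c - 1/c) * gaussPdf t + (1/c) * gaussPdf c := by
  have hK : (0:ℝ) < (Real.sqrt (2 * Real.pi))⁻¹ := inv_pos.2 sqrt_two_pi_pos
  have h := keyA c |t|
  rw [sq_abs] at h
  have h' := mul_le_mul_of_nonneg_left h (le_of_lt hK)
  rw [← mul_le_mul_iff_right₀ hc]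
  have hcc : c * (1/c) = 1 := mul_one_div_cancel (ne_of_gt hc)
  unfold gaussPdf
  set g := (Real.sqrt (2 * Real.pi))⁻¹ * Real.exp (-t ^ 2 / 2) with hg
  set gc := (Real.sqrt (2 * Real.pi))⁻¹ * Real.exp (-c ^ 2 / 2) with hgc
  have e1 : c * (1/c) * g = g := by rw [hcc, one_mul]
  have e2 : c * (1/c) * gc = gc := by rw [hcc, one_mul]
  have h'' : (c * |t| - c^2 + 1) * g ≤ gc := by
    rw [hg, hgc]; rw [hgc] at h'; ring_nf; ring_nf at h'; linarith
  nlinarith [e1, e2, h'']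

/-- `t² φ(t) ≤ (c² - 2) φ(t) + 2 φ(c)`. -/
lemma key2 (c t : ℝ) :
    t^2 * gaussPdf t ≤ (c^2 - 2) * gaussPdf t + 2 * gaussPdf c := by
  have hK : (0:ℝ) ≤ (Real.sqrt (2 * Real.pi))⁻¹ := inv_nonneg.2 (Real.sqrt_nonneg _)
  have h' := mul_le_mul_of_nonneg_left (keyB c t) hK
  unfold gaussPdf
  nlinarith [h']

/-- Combined pointwise bound. -/
lemma pointwise (c ν zabs t : ℝ) (hc : 0 < c) (hν : 0 ≤ ν) (hz : 0 ≤ zabs) :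
    |t| * (zabs + ν * |t|) * gaussPdf t ≤
      (zabs * (c - 1/c) + ν * (c^2 - 2)) * gaussPdf t
        + (zabs * (1/c) + ν * 2) * gaussPdf c := by
  have h1 := mul_le_mul_of_nonneg_left (key1 c t hc) hz
  have h2 := mul_le_mul_of_nonneg_left (key2 c t) hν
  have hexpand : |t| * (zabs + ν * |t|) * gaussPdf t
      = zabs * (|t| * gaussPdf t) + ν * (t^2 * gaussPdf t) := by
    rw [← sq_abs]; ring
  rw [hexpand]; linarith

/-- Bound on the scale-score term: with `Q(z) = ∫ (z−τ)τ φ((z−τ)/ν) ν⁻¹ dG(τ)` and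
`φ₊(ρ) = √(log(1/(2πρ²)))`, for every `ρ ∈ (0, e⁻¹/√(2π))`,
`|Q(z)| / (f_{G,ν}(z) ∨ (ρ/ν)) ≤ ν φ₊(ρ) (|z| + ν φ₊(ρ))`. -/
theorem Q_bound
    (G : Measure ℝ) [IsProbabilityMeasure G] (ν : ℝ) (hν : 0 < ν)
    (z : ℝ) (ρ : ℝ)
    (hρ : ρ ∈ Set.Ioo (0:ℝ) ((Real.exp 1)⁻¹ / Real.sqrt (2 * Real.pi))) :
    |∫ τ, (z - τ) * τ * gaussPdf ((z - τ) / ν) * ν⁻¹ ∂G|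
        / (mixDens G ν z ⊔ (ρ / ν))
      ≤ ν * Real.sqrt (Real.log (1 / (2 * Real.pi * ρ ^ 2))) *
          (|z| + ν * Real.sqrt (Real.log (1 / (2 * Real.pi * ρ ^ 2)))) := by
  obtain ⟨hρ0, hρ1⟩ := hρ
  have hπ : (0:ℝ) < 2 * Real.pi := by positivity
  set L := Real.log (1 / (2 * Real.pi * ρ ^ 2)) with hLdef
  have hsq : 2 * Real.pi * ρ ^ 2 < Real.exp (-2) := by
    have h2 : ρ * Real.sqrt (2 * Real.pi) < (Real.exp 1)⁻¹ := by
      rw [div_eq_mul_inv] at hρ1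
      calc ρ * Real.sqrt (2*Real.pi)
          < ((Real.exp 1)⁻¹ * (Real.sqrt (2*Real.pi))⁻¹) * Real.sqrt (2*Real.pi) :=
            mul_lt_mul_of_pos_right hρ1 sqrt_two_pi_pos
        _ = (Real.exp 1)⁻¹ := by
            rw [mul_assoc, inv_mul_cancel₀ (ne_of_gt sqrt_two_pi_pos), mul_one]
    have h3 : (ρ * Real.sqrt (2*Real.pi))^2 < ((Real.exp 1)⁻¹)^2 := by
      apply pow_lt_pow_left₀ h2 (by positivity)
      norm_num
    have h4 : (ρ * Real.sqrt (2*Real.pi))^2 = ρ^2 * (2 * Real.pi) := by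
      rw [mul_pow, Real.sq_sqrt (le_of_lt hπ)]
    have h5 : ((Real.exp 1)⁻¹)^2 = Real.exp (-2) := by
      rw [← Real.exp_neg, sq, ← Real.exp_add]; norm_num
    rw [h4, h5] at h3; linarith
  have hL2 : 2 < L := by
    rw [hLdef, one_div, Real.log_inv]
    have : Real.log (2 * Real.pi * ρ ^ 2) < -2 := by
      calc Real.log (2 * Real.pi * ρ ^ 2) < Real.log (Real.exp (-2)) :=
            Real.log_lt_log (by positivity) hsq
        _ = -2 := Real.log_exp _
    linarith
  have hL0 : 0 ≤ L := by linarith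
  set c := Real.sqrt L with hcdef
  have hc2 : c ^ 2 = L := Real.sq_sqrt hL0
  have hc0 : 0 < c := Real.sqrt_pos.2 (by linarith)
  have hc1 : 1 < c := by nlinarith [Real.sqrt_nonneg L]
  have hgc : gaussPdf c = ρ := by
    unfold gaussPdf
    rw [hc2]
    have hexp : Real.exp (-L / 2) = Real.sqrt (2 * Real.pi) * ρ := by
      have h1 : -L / 2 = Real.log (2 * Real.pi * ρ ^ 2) / 2 := by
        rw [hLdef, one_div, Real.log_inv]; ring
      have h2 : Real.log (2 * Real.pi * ρ ^ 2) / 2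
          = Real.log (Real.sqrt (2 * Real.pi * ρ ^ 2)) := by
        rw [Real.log_sqrt (by positivity)]
      rw [h1, h2, Real.exp_log (Real.sqrt_pos.2 (by positivity))]
      rw [Real.sqrt_mul (le_of_lt hπ), Real.sqrt_sq (le_of_lt hρ0)]
    rw [hexp, ← mul_assoc, inv_mul_cancel₀ (ne_of_gt sqrt_two_pi_pos), one_mul]
  set A : ℝ := |z| * (c - 1/c) + ν * (c^2 - 2) with hAdef
  set B : ℝ := |z| * (1/c) + ν * 2 with hBdef
  have hc2' : 2 < c^2 := by rw [hc2]; exact hL2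
  have hA0 : 0 ≤ A := by
    have h1 : 1/c ≤ c := by
      rw [div_le_iff₀ hc0]; nlinarith
    have hz1 : 0 ≤ |z| * (c - 1/c) := mul_nonneg (abs_nonneg z) (by linarith)
    have hz2 : 0 ≤ ν * (c^2 - 2) := mul_nonneg (le_of_lt hν) (by linarith)
    rw [hAdef]; linarith
  have hB0 : 0 ≤ B := by
    have hz1 : 0 ≤ |z| * (1/c) := mul_nonneg (abs_nonneg z) (by positivity)
    rw [hBdef]; linarith
  have hAB : A + B = c * |z| + ν * c^2 := by
    rw [hAdef, hBdef]; field_simp; ring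
  have hmeas : Continuous (fun τ : ℝ => gaussPdf ((z - τ) / ν)) := by
    apply gaussPdf_continuous.comp; fun_prop
  have hIg : Integrable (fun τ : ℝ => gaussPdf ((z - τ) / ν)) G := by
    apply Integrable.mono' (integrable_const ((Real.sqrt (2*Real.pi))⁻¹))
      hmeas.aestronglyMeasurable
    filter_upwards with τ
    rw [Real.norm_eq_abs, abs_of_pos (gaussPdf_pos _)]
    exact gaussPdf_le _
  have hIdom : Integrable (fun τ : ℝ => A * gaussPdf ((z - τ) / ν) + B * ρ) G :=
    (hIg.const_mul A).add (integrable_const _)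
  set F : ℝ → ℝ := fun τ => (z - τ) * τ * gaussPdf ((z - τ) / ν) * ν⁻¹ with hFdef
  have hptw : ∀ τ, |F τ| ≤ A * gaussPdf ((z - τ) / ν) + B * ρ := by
    intro τ
    have hFabs : |F τ| = |(z - τ)/ν| * |τ| * gaussPdf ((z - τ)/ν) := by
      rw [hFdef]
      simp only [abs_mul, abs_of_pos (gaussPdf_pos _), abs_inv, abs_of_pos hν,
        abs_div, div_eq_mul_inv]
      ring
    have hnt : ν * |(z - τ)/ν| = |z - τ| := by
      rw [abs_div, abs_of_pos hν]
      field_simp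
    have hτb : |τ| ≤ |z| + ν * |(z - τ)/ν| := by
      rw [hnt]
      calc |τ| = |z - (z - τ)| := by ring_nf
        _ ≤ |z| + |z - τ| := abs_sub _ _
    have h1 : |F τ| ≤ |(z - τ)/ν| * (|z| + ν * |(z - τ)/ν|) * gaussPdf ((z - τ)/ν) := by
      rw [hFabs]
      apply mul_le_mul_of_nonneg_right _ (le_of_lt (gaussPdf_pos _))
      exact mul_le_mul_of_nonneg_left hτb (abs_nonneg _)
    calc |F τ| ≤ |(z - τ)/ν| * (|z| + ν * |(z - τ)/ν|) * gaussPdf ((z - τ)/ν) := h1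
      _ ≤ A * gaussPdf ((z - τ)/ν) + B * gaussPdf c := by
          rw [hAdef, hBdef]
          exact pointwise c ν |z| ((z - τ)/ν) hc0 (le_of_lt hν) (abs_nonneg z)
      _ = A * gaussPdf ((z - τ)/ν) + B * ρ := by rw [hgc]
  have hnum : |∫ τ, F τ ∂G| ≤ A * (ν * mixDens G ν z) + B * ρ := by
    have h1 : |∫ τ, F τ ∂G| ≤ ∫ τ, |F τ| ∂G := by
      have := norm_integral_le_integral_norm (μ := G) F
      simpa [Real.norm_eq_abs] using this
    have h2 : ∫ τ, |F τ| ∂G ≤ ∫ τ, (A * gaussPdf ((z - τ) / ν) + B * ρ) ∂G := by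
      apply integral_mono_of_nonneg
      · filter_upwards with τ; exact abs_nonneg _
      · exact hIdom
      · filter_upwards with τ; exact hptw τ
    have h3 : ∫ τ, (A * gaussPdf ((z - τ) / ν) + B * ρ) ∂G
        = A * (∫ τ, gaussPdf ((z - τ) / ν) ∂G) + B * ρ := by
      rw [integral_add (hIg.const_mul A) (integrable_const _), integral_const_mul,
        integral_const]
      simp
    have h4 : ν * mixDens G ν z = ∫ τ, gaussPdf ((z - τ) / ν) ∂G := by
      unfold mixDens
      rw [integral_mul_const]
      field_simp
    rw [h4]; linarith
  have hD0 : 0 < mixDens G ν z ⊔ (ρ / ν) := lt_sup_of_lt_right (by positivity)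
  rw [div_le_iff₀ hD0]
  have hmax : ν * (mixDens G ν z ⊔ (ρ / ν)) = (ν * mixDens G ν z) ⊔ ρ := by
    rw [mul_max_of_nonneg _ _ (le_of_lt hν)]
    congr 1
    field_simp
  have hfinal : A * (ν * mixDens G ν z) + B * ρ
      ≤ (A + B) * ((ν * mixDens G ν z) ⊔ ρ) := by
    have h1 : ν * mixDens G ν z ≤ (ν * mixDens G ν z) ⊔ ρ := le_max_left _ _
    have h2 : ρ ≤ (ν * mixDens G ν z) ⊔ ρ := le_max_right _ _
    nlinarith [mul_le_mul_of_nonneg_left h1 hA0, mul_le_mul_of_nonneg_left h2 hB0]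
  calc |∫ τ, F τ ∂G| ≤ A * (ν * mixDens G ν z) + B * ρ := hnum
    _ ≤ (A + B) * ((ν * mixDens G ν z) ⊔ ρ) := hfinal
    _ = (c * |z| + ν * c^2) * (ν * (mixDens G ν z ⊔ (ρ / ν))) := by rw [hAB, hmax]
    _ = ν * c * (|z| + ν * c) * (mixDens G ν z ⊔ (ρ / ν)) := by ring
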